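/- Let W ∈ L(H) be a positive operator. The relation ₋*_W≤ on L(H), defined by A ₋*_W≤ B iff range B = range A + range(B − A), range A ∩ range(B − A) = {0}, and range(B − A) ⊆ ker(A*W), is a partial order: it is reflexive, antisymmetric and transitive. -/

import Mathlib

open ContinuousLinearMap
open scoped ComplexInnerProductSpace

noncomputable section

variable {H : Type*} [NormedAddCommGroup H] [InnerProductSpace ℂ H] [CompleteSpace H]

/-- `M(W,S)`: the set of operators `X` with `0 ≤ X ≤ W` (Loewner order) and `range X ⊆ S^⊥`. -/
def MSet (W : H →L[ℂ] H) (S : Submodule ℂ H) : Set (H →L[ℂ] H) :=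
  {X | X.IsPositive ∧ (W - X).IsPositive ∧ LinearMap.range (X : H →ₗ[ℂ] H) ≤ Sᗮ}

/-- `T` is the shorted operator of `W` to `S`, i.e. the maximum of `M(W,S)` in the Loewner
order. -/
def IsShorted (W : H →L[ℂ] H) (S : Submodule ℂ H) (T : H →L[ℂ] H) : Prop :=
  T ∈ MSet W S ∧ ∀ X ∈ MSet W S, (T - X).IsPositive

/-- The minus order: `A ⁻≤ B` iff there are bounded idempotents `P, Q` with `A = PB` and
`A* = QB*`. -/
def MinusLE (A B : H →L[ℂ] H) : Prop :=
  ∃ P Q : H →L[ℂ] H, IsIdempotentElem P ∧ IsIdempotentElem Q ∧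
    A = P ∘L B ∧ adjoint A = Q ∘L adjoint B

/-- The pair `(W, N)` is compatible: there is a bounded idempotent `Q` with range `N` such that
`WQ` is selfadjoint. -/
def Compatible (W : H →L[ℂ] H) (N : Submodule ℂ H) : Prop :=
  ∃ Q : H →L[ℂ] H, IsIdempotentElem Q ∧ LinearMap.range (Q : H →ₗ[ℂ] H) = N ∧ IsSelfAdjoint (W ∘L Q)

/-- `M⁻(W,S)`: operators `X` with `X ⁻≤ W`, `range X ⊆ S^⊥` and `range X* ⊆ S^⊥`. -/
def MMinusSet (W : H →L[ℂ] H) (S : Submodule ℂ H) : Set (H →L[ℂ] H) :=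
  {X | MinusLE X W ∧ LinearMap.range (X : H →ₗ[ℂ] H) ≤ Sᗮ ∧ LinearMap.range (adjoint X : H →ₗ[ℂ] H) ≤ Sᗮ}

/-- `X₀` is a `W`-inverse of `M` in `R(C)`: for every `x`, `X₀ x` is a `W`-weighted least squares
solution of `M z = C x`. -/
def WInverseIn (W M C X₀ : H →L[ℂ] H) : Prop :=
  ∀ x z : H, (⟪W (M (X₀ x) - C x), M (X₀ x) - C x⟫).re ≤ (⟪W (M z - C x), M z - C x⟫).re

/-- The left weighted star order `A ₋*_W≤ B`. -/
def LStarW (W A B : H →L[ℂ] H) : Prop :=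
  LinearMap.range (B : H →ₗ[ℂ] H) = LinearMap.range (A : H →ₗ[ℂ] H) ⊔ LinearMap.range ((B - A : H →L[ℂ] H) : H →ₗ[ℂ] H) ∧
  LinearMap.range (A : H →ₗ[ℂ] H) ⊓ LinearMap.range ((B - A : H →L[ℂ] H) : H →ₗ[ℂ] H) = ⊥ ∧
  LinearMap.range ((B - A : H →L[ℂ] H) : H →ₗ[ℂ] H) ≤ LinearMap.ker (adjoint A ∘L W : H →ₗ[ℂ] H)

/-- The right weighted star order `A ≤*_W B`. -/
def RStarW (W A B : H →L[ℂ] H) : Prop :=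
  LinearMap.range (adjoint B : H →ₗ[ℂ] H) =
    LinearMap.range (adjoint A : H →ₗ[ℂ] H) ⊔ LinearMap.range ((adjoint B - adjoint A : H →L[ℂ] H) : H →ₗ[ℂ] H) ∧
  LinearMap.range (adjoint A : H →ₗ[ℂ] H) ⊓ LinearMap.range ((adjoint B - adjoint A : H →L[ℂ] H) : H →ₗ[ℂ] H) = ⊥ ∧
  LinearMap.range ((adjoint B - adjoint A : H →L[ℂ] H) : H →ₗ[ℂ] H) ≤ LinearMap.ker (A ∘L W : H →ₗ[ℂ] H)

/-- The weighted star order `A *_W≤ B`. -/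
def StarW (W A B : H →L[ℂ] H) : Prop :=
  LStarW W A B ∧ RStarW W A B


lemma ker_adjoint_comp_mono {W A B : H →L[ℂ] H}
    (h : LinearMap.range (A : H →ₗ[ℂ] H) ≤ LinearMap.range (B : H →ₗ[ℂ] H)) :
    LinearMap.ker (adjoint B ∘L W : H →ₗ[ℂ] H) ≤ LinearMap.ker (adjoint A ∘L W : H →ₗ[ℂ] H) := by
  intro x hx
  rw [LinearMap.mem_ker] at hx ⊢
  have hx' : adjoint B (W x) = 0 := hx
  obtain ⟨v, hv⟩ := h ⟨adjoint A (W x), rfl⟩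
  change B v = A (adjoint A (W x)) at hv
  have key : ⟪adjoint A (W x), adjoint A (W x)⟫ = 0 := by
    rw [ContinuousLinearMap.adjoint_inner_left, ← hv,
      ← ContinuousLinearMap.adjoint_inner_left, hx']
    simp
  have : adjoint A (W x) = 0 := inner_self_eq_zero.mp key
  simpa using this

/-- the left weighted star order `₋*_W≤` is a partial order on `L(H)`:
reflexive, antisymmetric and transitive. -/
theorem stmt13 (W : H →L[ℂ] H) (hW : W.IsPositive) :
    (∀ A : H →L[ℂ] H, LStarW W A A) ∧
      (∀ A B : H →L[ℂ] H, LStarW W A B → LStarW W B A → A = B) ∧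
      (∀ A B C : H →L[ℂ] H, LStarW W A B → LStarW W B C → LStarW W A C) := by
  refine ⟨?_, ?_, ?_⟩
  · intro A
    have h0 : LinearMap.range ((0 : H →L[ℂ] H) : H →ₗ[ℂ] H) = ⊥ := LinearMap.range_eq_bot.mpr rfl
    refine ⟨?_, ?_, ?_⟩ <;> simp [sub_self, h0]
  · intro A B hAB hBA
    obtain ⟨h1, h2, -⟩ := hAB
    obtain ⟨h1', -, -⟩ := hBA
    have hRR : LinearMap.range ((A - B : H →L[ℂ] H) : H →ₗ[ℂ] H) = LinearMap.range ((B - A : H →L[ℂ] H) : H →ₗ[ℂ] H) := by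
      rw [(neg_sub B A).symm]
      exact LinearMap.range_neg _
    rw [hRR] at h1'
    have hBA' : LinearMap.range (B : H →ₗ[ℂ] H) ≤ LinearMap.range (A : H →ₗ[ℂ] H) := h1' ▸ le_sup_left
    have hAB' : LinearMap.range (A : H →ₗ[ℂ] H) ≤ LinearMap.range (B : H →ₗ[ℂ] H) := h1 ▸ le_sup_left
    have hR : LinearMap.range ((B - A : H →L[ℂ] H) : H →ₗ[ℂ] H) ≤ LinearMap.range (A : H →ₗ[ℂ] H) :=
      le_trans (h1 ▸ le_sup_right) hBA'
    have hbot : LinearMap.range ((B - A : H →L[ℂ] H) : H →ₗ[ℂ] H) = ⊥ :=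
      le_bot_iff.mp (h2 ▸ le_inf hR le_rfl)
    have : (B - A : H →L[ℂ] H) = 0 := by
      ext x
      have := LinearMap.range_eq_bot.mp hbot
      exact congrFun (congrArg DFunLike.coe this) x
    exact (sub_eq_zero.mp this).symm
  · intro A B C hAB hBC
    obtain ⟨h1, h2, h3⟩ := hAB
    obtain ⟨h1', h2', h3'⟩ := hBC
    have hAB' : LinearMap.range (A : H →ₗ[ℂ] H) ≤ LinearMap.range (B : H →ₗ[ℂ] H) := h1 ▸ le_sup_left
    have hBC' : LinearMap.range (B : H →ₗ[ℂ] H) ≤ LinearMap.range (C : H →ₗ[ℂ] H) := h1' ▸ le_sup_left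
    have hAC : LinearMap.range (A : H →ₗ[ℂ] H) ≤ LinearMap.range (C : H →ₗ[ℂ] H) := le_trans hAB' hBC'
    refine ⟨?_, ?_, ?_⟩
    · apply le_antisymm
      · rintro x ⟨z, rfl⟩
        have : C z = A z + (C - A) z := by simp
        change C z ∈ _
        rw [this]
        exact Submodule.add_mem_sup ⟨z, rfl⟩ ⟨z, rfl⟩
      · refine sup_le hAC ?_
        rintro x ⟨z, rfl⟩
        have : (C - A) z = C z - A z := by simp
        change (C - A) z ∈ _
        rw [this]
        exact sub_mem ⟨z, rfl⟩ (hAC ⟨z, rfl⟩)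
    · rw [eq_bot_iff]
      rintro x ⟨hxA, z, rfl⟩
      have hsplit : (C - A) z = (B - A) z + (C - B) z := by
        simp only [ContinuousLinearMap.sub_apply]; abel
      have hR1B : LinearMap.range ((B - A : H →L[ℂ] H) : H →ₗ[ℂ] H) ≤ LinearMap.range (B : H →ₗ[ℂ] H) := by
        rw [h1]; exact le_sup_right
      have hCB : (C - B) z ∈ LinearMap.range (B : H →ₗ[ℂ] H) ⊓ LinearMap.range ((C - B : H →L[ℂ] H) : H →ₗ[ℂ] H) := by
        constructor
        · have he : (C - B) z = (C - A) z - (B - A) z := by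
            simp only [ContinuousLinearMap.sub_apply]; abel
          rw [he]
          exact sub_mem (hAB' hxA) (hR1B ⟨z, rfl⟩)
        · exact ⟨z, rfl⟩
      rw [h2'] at hCB
      have hCB0 : (C - B) z = 0 := hCB
      have hBA : (C - A) z ∈ LinearMap.range (A : H →ₗ[ℂ] H) ⊓ LinearMap.range ((B - A : H →L[ℂ] H) : H →ₗ[ℂ] H) := by
        refine ⟨hxA, ?_⟩
        rw [hsplit, hCB0, add_zero]
        exact ⟨z, rfl⟩
      rw [h2] at hBA
      exact hBA
    · rintro x ⟨z, rfl⟩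
      have hsplit : (C - A) z = (B - A) z + (C - B) z := by
        simp only [ContinuousLinearMap.sub_apply]; abel
      change (C - A) z ∈ _
      rw [hsplit]
      exact add_mem (h3 ⟨z, rfl⟩) (ker_adjoint_comp_mono hAB' (h3' ⟨z, rfl⟩))
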